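/- Let m ≥ 2. For every n ≥ 2, the palindromic prefix u_n of the m-bonacci word is closed; more precisely, u_{n-1} is a border of u_n that has no internal occurrence in u_n (it occurs exactly twice in u_n, as a prefix and as a suffix). -/

import Mathlib

/-- The `m`-bonacci morphism on letters: `i ↦ 0(i+1)` for `i ≤ m-2`, `(m-1) ↦ 0`. -/
def phi (m a : ℕ) : List ℕ := if a = m - 1 then [0] else [0, a + 1]

/-- The `m`-bonacci morphism on words. -/
def phiW (m : ℕ) (w : List ℕ) : List ℕ := w.flatMap (phi m)

/-- The finite `m`-bonacci words `h_n = φ_m^n(0)`. -/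
def hb (m : ℕ) : ℕ → List ℕ
  | 0 => [0]
  | n+1 => phiW m (hb m n)

/-- The palindromic prefixes of the `m`-bonacci word, shifted:
`ub m n` is the paper's `u_{n+1}` (so `ub m 0 = u₁ = ε`, and `u_{n+2} = h_n u_{n+1}`). -/
def ub (m : ℕ) : ℕ → List ℕ
  | 0 => []
  | n+1 => hb m n ++ ub m n

/-- Number of occurrences of `x` as a factor of `w` (counted by starting position). -/
def occ (x w : List ℕ) : ℕ :=
  ((List.range (w.length + 1)).filter (fun i => x.isPrefixOf (w.drop i))).length

/-- A word is closed if it is a single letter or has a border (a proper factor that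
is both a prefix and a suffix) occurring exactly twice in it. -/
def ClosedWord (w : List ℕ) : Prop :=
  w.length = 1 ∨
    ∃ x : List ℕ, x ≠ [] ∧ x.length < w.length ∧ x <+: w ∧ x <:+ w ∧ occ x w = 2

/-! ### Auxiliary lemmas -/

lemma phi_head (m a : ℕ) : ∃ t, phi m a = 0 :: t := by
  unfold phi; split
  · exact ⟨[], rfl⟩
  · exact ⟨[a+1], rfl⟩

lemma phiW_nil (m : ℕ) : phiW m [] = [] := rfl

lemma phiW_cons (m a : ℕ) (w : List ℕ) : phiW m (a :: w) = phi m a ++ phiW m w := by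
  simp [phiW]

lemma phiW_append (m : ℕ) (w z : List ℕ) : phiW m (w ++ z) = phiW m w ++ phiW m z := by
  simp [phiW]

lemma phiW0_head (m : ℕ) (w : List ℕ) : ∃ t, phiW m w ++ [0] = 0 :: t := by
  cases w with
  | nil => exact ⟨[], rfl⟩
  | cons a w =>
    obtain ⟨t, ht⟩ := phi_head m a
    exact ⟨t ++ phiW m w ++ [0], by simp [phiW_cons, ht]⟩

lemma ub_succ (m k : ℕ) : ub m (k+1) = phiW m (ub m k) ++ [0] := by
  induction k with
  | zero => rfl
  | succ k ih =>
    show hb m (k+1) ++ ub m (k+1) = phiW m (ub m (k+1)) ++ [0]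
    rw [show ub m (k+1) = hb m k ++ ub m k from rfl, phiW_append, List.append_assoc, ← ih]
    rfl

lemma hb_head (m n : ℕ) : ∃ t, hb m n = 0 :: t := by
  induction n with
  | zero => exact ⟨[], rfl⟩
  | succ n ih =>
    obtain ⟨t, ht⟩ := ih
    obtain ⟨s, hs⟩ := phi_head m 0
    exact ⟨s ++ phiW m t, by show phiW m (hb m n) = _; rw [ht, phiW_cons, hs]; simp⟩

lemma hb_ne_nil (m n : ℕ) : hb m n ≠ [] := by
  obtain ⟨t, ht⟩ := hb_head m n; simp [ht]

lemma hb_len_pos (m n : ℕ) : 0 < (hb m n).length :=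
  List.length_pos_iff.mpr (hb_ne_nil m n)

lemma ub_head (m K : ℕ) (hK : 1 ≤ K) : ∃ t, ub m K = 0 :: t := by
  cases K with
  | zero => omega
  | succ K' =>
    obtain ⟨t, ht⟩ := hb_head m K'
    refine ⟨t ++ ub m K', ?_⟩
    show hb m K' ++ ub m K' = _
    rw [ht]; simp

lemma ub_ne_nil (m K : ℕ) (hK : 1 ≤ K) : ub m K ≠ [] := by
  obtain ⟨t, ht⟩ := ub_head m K hK; simp [ht]

lemma ub_len_succ (m k : ℕ) : (ub m (k+1)).length = (hb m k).length + (ub m k).length := by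
  show (hb m k ++ ub m k).length = _; simp

lemma phiW_prefix (m : ℕ) {w z : List ℕ} (h : w <+: z) : phiW m w <+: phiW m z := by
  obtain ⟨t, rfl⟩ := h
  rw [phiW_append]
  exact List.prefix_append _ _

lemma phiW0_prefix (m : ℕ) {w z : List ℕ} (h : w <+: z) :
    phiW m w ++ [0] <+: phiW m z ++ [0] := by
  obtain ⟨t, rfl⟩ := h
  obtain ⟨s, hs⟩ := phiW0_head m t
  rw [phiW_append, List.append_assoc, hs]
  exact ⟨s, by simp⟩

lemma hb_prefix_succ (m n : ℕ) : hb m n <+: hb m (n+1) := by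
  induction n with
  | zero =>
    show [0] <+: phiW m [0]
    obtain ⟨s, hs⟩ := phi_head m 0
    rw [show phiW m [0] = phi m 0 from by simp [phiW], hs]
    exact ⟨s, rfl⟩
  | succ n ih => exact phiW_prefix m ih

lemma hb_prefix (m : ℕ) {i j : ℕ} (h : i ≤ j) : hb m i <+: hb m j := by
  induction j with
  | zero => rw [Nat.le_zero.mp h]
  | succ j ih =>
    rcases Nat.lt_or_ge i (j+1) with hlt | hge
    · exact (ih (Nat.lt_succ_iff.mp hlt)).trans (hb_prefix_succ m j)
    · rw [Nat.le_antisymm h hge]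

lemma hb_prefix_ub (m : ℕ) {n K : ℕ} (h : n + 1 ≤ K) : hb m n <+: ub m K := by
  cases K with
  | zero => omega
  | succ K' =>
    show hb m n <+: hb m K' ++ ub m K'
    exact (hb_prefix m (by omega : n ≤ K')).trans (List.prefix_append _ _)

lemma ub_prefix_succ (m k : ℕ) : ub m k <+: ub m (k+1) := by
  induction k with
  | zero => exact List.nil_prefix
  | succ k ih =>
    rw [ub_succ m k, ub_succ m (k+1)]
    exact phiW0_prefix m ih

lemma ub_len_lt (m : ℕ) {a b : ℕ} (h : a < b) : (ub m a).length < (ub m b).length := by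
  induction b with
  | zero => omega
  | succ b ih =>
    have hlen := ub_len_succ m b
    have hpos := hb_len_pos m b
    rcases Nat.lt_or_ge a b with hab | hab
    · have := ih hab; omega
    · have : a = b := by omega
      subst this; omega

lemma ub_len_le_reflect (m : ℕ) {a b : ℕ} (h : (ub m a).length ≤ (ub m b).length) : a ≤ b := by
  by_contra hc
  exact absurd (ub_len_lt m (by omega : b < a)) (by omega)

lemma phiW_take_mono (m : ℕ) (w : List ℕ) {r q : ℕ} (h : r ≤ q) :
    (phiW m (w.take r)).length ≤ (phiW m (w.take q)).length :=
  (phiW_prefix m (List.take_prefix_take_left h)).length_le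

/-- Zero positions inside `phiW z ++ [0]` are block boundaries. -/
lemma zero_block (m : ℕ) : ∀ (z : List ℕ) (p : ℕ), p ≤ (phiW m z).length →
    [0] <+: (phiW m z ++ [0]).drop p → ∃ q, q ≤ z.length ∧ p = (phiW m (z.take q)).length := by
  intro z
  induction z with
  | nil =>
    intro p hp _
    have hp0 : p = 0 := by
      have : (phiW m ([] : List ℕ)).length = 0 := by rw [phiW_nil]; rfl
      omega
    exact ⟨0, by simp, by simp [hp0, phiW_nil]⟩
  | cons a z ih =>
    intro p hp h0
    rcases Nat.eq_zero_or_pos p with rfl | hpos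
    · exact ⟨0, by simp, by simp [phiW_nil]⟩
    by_cases hlt : p < (phi m a).length
    · exfalso
      have ha : phi m a = [0, a+1] := by
        by_cases hcase : a = m - 1
        · exfalso
          rw [show phi m a = [0] from by unfold phi; simp [hcase]] at hlt
          simp at hlt
          omega
        · unfold phi; simp [hcase]
      have hp1 : p = 1 := by rw [ha] at hlt; simp at hlt; omega
      rw [phiW_cons, ha, hp1] at h0
      have h0' : [0] <+: (a+1) :: (phiW m z ++ [0]) := by
        simpa using h0
      rw [List.cons_prefix_cons] at h0'
      omega
    · push_neg at hlt
      have hp' : p - (phi m a).length ≤ (phiW m z).length := by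
        rw [phiW_cons, List.length_append] at hp; omega
      have hsplit : p = (phi m a).length + (p - (phi m a).length) := by omega
      have h0' : [0] <+: (phiW m z ++ [0]).drop (p - (phi m a).length) := by
        rw [phiW_cons, List.append_assoc, hsplit, List.drop_append] at h0
        simpa [List.drop_eq_nil_of_le (Nat.le_add_right (phi m a).length (p - (phi m a).length))] using h0
      obtain ⟨q, hq, hpq⟩ := ih (p - (phi m a).length) hp' h0'
      refine ⟨q + 1, by simpa using hq, ?_⟩
      show p = (phiW m (a :: z.take q)).length
      rw [phiW_cons, List.length_append]
      omega

lemma drop_block (m : ℕ) (z : List ℕ) (q : ℕ) :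
    (phiW m z ++ [0]).drop (phiW m (z.take q)).length = phiW m (z.drop q) ++ [0] := by
  have h : phiW m z ++ [0] = phiW m (z.take q) ++ (phiW m (z.drop q) ++ [0]) := by
    rw [← List.append_assoc, ← phiW_append, List.take_append_drop]
  rw [h, List.drop_left]

/-- `w ↦ phiW w ++ [0]` reflects the prefix order. -/
lemma phiW_cancel (m : ℕ) : ∀ (w z : List ℕ),
    phiW m w ++ [0] <+: phiW m z ++ [0] → w <+: z := by
  intro w
  induction w with
  | nil => intro z _; exact List.nil_prefix
  | cons a w ih =>
    intro z h
    cases z with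
    | nil =>
      exfalso
      have hlen := h.length_le
      obtain ⟨t, ht⟩ := phi_head m a
      rw [phiW_cons, ht] at hlen
      simp [phiW_nil] at hlen
    | cons b z =>
      by_cases ha : a = m - 1 <;> by_cases hb' : b = m - 1
      · have hpa : phi m a = [0] := by unfold phi; simp [ha]
        have hpb : phi m b = [0] := by unfold phi; simp [hb']
        rw [phiW_cons, phiW_cons, hpa, hpb] at h
        simp only [List.append_assoc, List.cons_append, List.nil_append] at h
        rw [List.cons_prefix_cons] at h
        exact List.cons_prefix_cons.mpr ⟨ha.trans hb'.symm, ih z h.2⟩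
      · exfalso
        have hpa : phi m a = [0] := by unfold phi; simp [ha]
        have hpb : phi m b = [0, b+1] := by unfold phi; simp [hb']
        rw [phiW_cons, phiW_cons, hpa, hpb] at h
        simp only [List.append_assoc, List.cons_append, List.nil_append] at h
        obtain ⟨s, hs⟩ := phiW0_head m w
        rw [hs] at h
        rw [List.cons_prefix_cons] at h
        have h2 := h.2
        rw [List.cons_prefix_cons] at h2
        omega
      · exfalso
        have hpa : phi m a = [0, a+1] := by unfold phi; simp [ha]
        have hpb : phi m b = [0] := by unfold phi; simp [hb']
        rw [phiW_cons, phiW_cons, hpa, hpb] at h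
        simp only [List.append_assoc, List.cons_append, List.nil_append] at h
        obtain ⟨s, hs⟩ := phiW0_head m z
        rw [hs] at h
        rw [List.cons_prefix_cons] at h
        have h2 := h.2
        rw [List.cons_prefix_cons] at h2
        omega
      · have hpa : phi m a = [0, a+1] := by unfold phi; simp [ha]
        have hpb : phi m b = [0, b+1] := by unfold phi; simp [hb']
        rw [phiW_cons, phiW_cons, hpa, hpb] at h
        simp only [List.append_assoc, List.cons_append, List.nil_append] at h
        rw [List.cons_prefix_cons] at h
        have h2 := h.2
        rw [List.cons_prefix_cons] at h2
        have hab : a = b := by omega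
        exact List.cons_prefix_cons.mpr ⟨hab, ih z h2.2⟩

/-- Main lemma: a positive occurrence of `ub m (j+1)` in `ub m (K+1)`
starts at position at least `|hb m (j+1)|`. -/
lemma first_return (m : ℕ) (hm : 2 ≤ m) :
    ∀ (j K p : ℕ), ub m (j+1) <+: (ub m (K+1)).drop p → 0 < p →
      (hb m (j+1)).length ≤ p := by
  intro j
  induction j with
  | zero =>
    intro K p hocc hpos
    have hu1 : ub m 1 = [0] := by show hb m 0 ++ ub m 0 = [0]; rfl
    rw [hu1, ub_succ] at hocc
    have hple : p ≤ (phiW m (ub m K)).length := by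
      have hlen := hocc.length_le
      rw [List.length_drop, List.length_append] at hlen
      simp only [List.length_singleton] at hlen
      omega
    obtain ⟨q, hq, hpq⟩ := zero_block m (ub m K) p hple hocc
    have hq1 : 1 ≤ q := by
      rcases Nat.eq_zero_or_pos q with rfl | h
      · exfalso
        have : (phiW m ((ub m K).take 0)).length = 0 := by simp [phiW_nil]
        omega
      · exact h
    have hKpos : 1 ≤ K := by
      rcases K with _ | K
      · exfalso; have : (ub m 0).length = 0 := rfl; omega
      · omega
    obtain ⟨t, ht⟩ := ub_head m K hKpos
    have htake : (ub m K).take 1 = [0] := by rw [ht]; rfl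
    have hmono := phiW_take_mono m (ub m K) hq1
    rw [htake] at hmono
    have hphi0 : phi m 0 = [0, 1] := by
      unfold phi
      have hne : ¬ (0 = m - 1) := by omega
      simp [hne]
    have h1 : (phiW m [0]).length = 2 := by
      rw [show phiW m [0] = phi m 0 from by simp [phiW], hphi0]; rfl
    have hhb1 : (hb m 1).length = 2 := by
      show (phiW m (hb m 0)).length = 2
      show (phiW m [0]).length = 2
      exact h1
    rw [hhb1]
    omega
  | succ i ih =>
    intro K p hocc hpos
    have hne : ub m (i+1+1) ≠ [] := ub_ne_nil m (i+1+1) (by omega)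
    rw [ub_succ m K] at hocc
    obtain ⟨t0, ht0⟩ := ub_head m (i+1+1) (by omega)
    have h0 : [0] <+: (phiW m (ub m K) ++ [0]).drop p := by
      refine List.IsPrefix.trans ?_ hocc
      rw [ht0]; exact ⟨t0, rfl⟩
    have hple : p ≤ (phiW m (ub m K)).length := by
      have hlen := hocc.length_le
      rw [List.length_drop, List.length_append] at hlen
      simp only [List.length_singleton] at hlen
      have hup : 1 ≤ (ub m (i+1+1)).length := List.length_pos_iff.mpr hne
      omega
    obtain ⟨q, hq, hpq⟩ := zero_block m (ub m K) p hple h0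
    have hq1 : 1 ≤ q := by
      rcases Nat.eq_zero_or_pos q with rfl | h
      · exfalso
        have : (phiW m ((ub m K).take 0)).length = 0 := by simp [phiW_nil]
        omega
      · exact h
    rw [hpq, drop_block] at hocc
    rw [ub_succ m (i+1)] at hocc
    have hpre : ub m (i+1) <+: (ub m K).drop q := phiW_cancel m _ _ hocc
    have hKq : q < (ub m K).length := by
      by_contra hc
      push_neg at hc
      rw [List.drop_eq_nil_of_le hc] at hpre
      exact ub_ne_nil m (i+1) (by omega) (List.prefix_nil.mp hpre)
    cases K with
    | zero =>
      exfalso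
      have : (ub m 0).length = 0 := rfl
      omega
    | succ K' =>
      have hqge : (hb m (i+1)).length ≤ q := ih K' q hpre hq1
      have hlenK : (ub m (i+1+1)).length ≤ (ub m (K'+1)).length := by
        have h1 := hpre.length_le
        rw [List.length_drop] at h1
        have h2 := ub_len_succ m (i+1)
        omega
      have hKge : i + 1 + 1 ≤ K' + 1 := ub_len_le_reflect m hlenK
      have hhbpre : hb m (i+1) <+: ub m (K'+1) := hb_prefix_ub m hKge
      have htake : (ub m (K'+1)).take (hb m (i+1)).length = hb m (i+1) :=
        (List.prefix_iff_eq_take.mp hhbpre).symm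
      have hmono := phiW_take_mono m (ub m (K'+1)) hqge
      rw [htake] at hmono
      have hfin : (hb m (i+1+1)).length = (phiW m (hb m (i+1))).length := rfl
      omega

/-! ### Counting occurrences -/

lemma range_filter_one : ∀ (K : ℕ) (p : ℕ → Bool), 0 < K →
    (∀ i, i < K → (p i = true ↔ i = 0)) → ((List.range K).filter p).length = 1 := by
  intro K
  induction K with
  | zero => omega
  | succ K ih =>
    intro p _ h
    rcases Nat.eq_zero_or_pos K with rfl | hK
    · have h0 : p 0 = true := (h 0 (by omega)).mpr rfl
      simp [List.range_succ, h0]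
    · have hK' : p K = false := by
        rcases Bool.eq_false_or_eq_true (p K) with ht | hf
        · exact absurd ((h K (by omega)).mp ht) (by omega)
        · exact hf
      rw [List.range_succ, List.filter_append]
      simp [hK']
      exact ih p hK (fun i hi => h i (by omega))

lemma range_filter_two : ∀ (N L : ℕ) (p : ℕ → Bool), 0 < L → L < N →
    (∀ i, i < N → (p i = true ↔ (i = 0 ∨ i = L))) →
    ((List.range N).filter p).length = 2 := by
  intro N
  induction N with
  | zero => omega
  | succ N ih =>
    intro L p hL hLN h
    rcases Nat.lt_or_ge L N with hlt | hge
    · have hN : p N = false := by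
        rcases Bool.eq_false_or_eq_true (p N) with ht | hf
        · have := (h N (by omega)).mp ht; omega
        · exact hf
      rw [List.range_succ, List.filter_append]
      simp [hN]
      exact ih L p hL hlt (fun i hi => h i (by omega))
    · have hLe : L = N := by omega
      subst hLe
      have hN : p L = true := (h L (by omega)).mpr (Or.inr rfl)
      rw [List.range_succ, List.filter_append]
      simp [hN]
      exact range_filter_one L p hL (fun i hi => by
        rw [h i (by omega)]
        omega)

lemma occ_two (m : ℕ) (hm : 2 ≤ m) (j : ℕ) :
    occ (ub m (j+1)) (ub m (j+1+1)) = 2 := by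
  unfold occ
  have hw : (ub m (j+1+1)).length = (hb m (j+1)).length + (ub m (j+1)).length :=
    ub_len_succ m (j+1)
  have hupos : 0 < (ub m (j+1)).length :=
    List.length_pos_iff.mpr (ub_ne_nil m (j+1) (by omega))
  apply range_filter_two _ ((hb m (j+1)).length) _ (hb_len_pos m (j+1)) (by omega)
  intro i hi
  show (ub m (j+1)).isPrefixOf ((ub m (j+1+1)).drop i) = true ↔ _
  rw [List.isPrefixOf_iff_prefix]
  constructor
  · intro hpre
    rcases Nat.eq_zero_or_pos i with rfl | hipos
    · left; rfl
    right
    have hge : (hb m (j+1)).length ≤ i := first_return m hm j (j+1) i hpre hipos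
    by_contra hne
    have higt : (hb m (j+1)).length < i := by omega
    have hlen := hpre.length_le
    rw [List.length_drop] at hlen
    omega
  · intro hi0
    rcases hi0 with rfl | rfl
    · rw [List.drop_zero]; exact ub_prefix_succ m (j+1)
    · have hdrop : (ub m (j+1+1)).drop (hb m (j+1)).length = ub m (j+1) := by
        show (hb m (j+1) ++ ub m (j+1)).drop (hb m (j+1)).length = _
        exact List.drop_left
      rw [hdrop]

/-- for `m ≥ 2` and `n ≥ 2`, the palindromic prefix `u_n` of the
`m`-bonacci word is closed; more precisely `u_{n-1}` is a border of `u_n` occurring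
exactly twice in `u_n` (here `ub m k` is the paper's `u_{k+1}`). -/
theorem ub_closed :
    ∀ m : ℕ, 2 ≤ m → ∀ n : ℕ, 2 ≤ n →
      ub m (n - 2) <+: ub m (n - 1) ∧ ub m (n - 2) <:+ ub m (n - 1) ∧
      occ (ub m (n - 2)) (ub m (n - 1)) = 2 ∧ ClosedWord (ub m (n - 1)) := by
  intro m hm n hn
  obtain ⟨j, rfl⟩ : ∃ j, n = j + 2 := ⟨n - 2, by omega⟩
  have h2 : j + 2 - 2 = j := by omega
  have h1 : j + 2 - 1 = j + 1 := by omega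
  rw [h2, h1]
  rcases Nat.eq_zero_or_pos j with rfl | hj
  · have hu1 : ub m 1 = [0] := by show hb m 0 ++ ub m 0 = [0]; rfl
    refine ⟨List.nil_prefix, List.nil_suffix, ?_, ?_⟩
    · show occ [] (ub m 1) = 2
      rw [hu1]
      decide
    · refine Or.inl ?_
      rw [hu1]
      rfl
  · obtain ⟨i, rfl⟩ : ∃ i, j = i + 1 := ⟨j - 1, by omega⟩
    have hpre : ub m (i+1) <+: ub m (i+1+1) := ub_prefix_succ m (i+1)
    have hsuf : ub m (i+1) <:+ ub m (i+1+1) := ⟨hb m (i+1), rfl⟩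
    have hocc : occ (ub m (i+1)) (ub m (i+1+1)) = 2 := occ_two m hm i
    have hlen : (ub m (i+1)).length < (ub m (i+1+1)).length := by
      rw [ub_len_succ m (i+1)]
      have := hb_len_pos m (i+1)
      omega
    exact ⟨hpre, hsuf, hocc,
      Or.inr ⟨ub m (i+1), ub_ne_nil m (i+1) (by omega), hlen, hpre, hsuf, hocc⟩⟩
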